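/- Let V = {1,...,m}×{1,...,n} with partial order (i,j) ≤ (h,k) iff i ≤ h and j ≥ k, and let Δ_t be the simplicial complex of subsets of V containing no antichain of cardinality t. Then the facets of Δ_t are exactly the families of pairwise disjoint saturated chains (paths) P_1,...,P_{t-1}, where P_i is an unrefinable chain from (i,n) to (m,i). -/

import Mathlib

/-- The partial order on the vertex set `{1,…,m} × {1,…,n}`:
`(i,j) ≤ (h,k)` iff `i ≤ h` and `j ≥ k`. -/
def pordLe {m n : ℕ} (p q : Fin m × Fin n) : Prop :=
  p.1 ≤ q.1 ∧ q.2 ≤ p.2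

/-- A face of `Δ_t`: a subset containing no antichain of cardinality `t`. -/
def IsFaceDelta {m n : ℕ} (t : ℕ) (F : Finset (Fin m × Fin n)) : Prop :=
  ¬ ∃ A : Finset (Fin m × Fin n), A ⊆ F ∧ A.card = t ∧
      ∀ x ∈ A, ∀ y ∈ A, x ≠ y → ¬ pordLe x y ∧ ¬ pordLe y x

/-- A facet of `Δ_t`: a face maximal under inclusion. -/
def IsFacetDelta {m n : ℕ} (t : ℕ) (F : Finset (Fin m × Fin n)) : Prop :=
  IsFaceDelta t F ∧ ∀ G : Finset (Fin m × Fin n), IsFaceDelta t G → F ⊆ G → G = F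

/-- `P` is a path (saturated/unrefinable chain) from `A` to `B`: a sequence of points
starting at `A`, ending at `B`, each step moving by `(1,0)` or `(0,-1)`. -/
def IsPath {m n : ℕ} (P : Finset (Fin m × Fin n)) (A B : Fin m × Fin n) : Prop :=
  ∃ (d : ℕ) (p : Fin (d + 1) → Fin m × Fin n), p 0 = A ∧ p (Fin.last d) = B ∧
    (∀ i : Fin d,
      (((p i.succ).1 : ℕ) = ((p i.castSucc).1 : ℕ) + 1 ∧ (p i.succ).2 = (p i.castSucc).2) ∨
      ((p i.succ).1 = (p i.castSucc).1 ∧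
        ((p i.castSucc).2 : ℕ) = ((p i.succ).2 : ℕ) + 1)) ∧
    P = Finset.image p Finset.univ

namespace DF

attribute [local instance] Classical.propDecidable

def pd (x y : ℕ × ℕ) : Prop := x.1 ≤ y.1 ∧ y.2 ≤ x.2
def sw (x y : ℕ × ℕ) : Prop := x.1 < y.1 ∧ x.2 < y.2
def box (m n u : ℕ) (x : ℕ × ℕ) : Prop := u ≤ x.1 ∧ x.1 < m ∧ u ≤ x.2 ∧ x.2 < n
def Face (k : ℕ) (F : Finset (ℕ × ℕ)) : Prop :=
  ∀ l : List (ℕ × ℕ), l.Pairwise sw → (∀ x ∈ l, x ∈ F) → l.length < k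
def Tight (m n u k : ℕ) (F : Finset (ℕ × ℕ)) : Prop :=
  ∀ x, box m n u x → x ∉ F → ∃ ys zs : List (ℕ × ℕ),
    (∀ a ∈ ys, a ∈ F) ∧ (∀ a ∈ zs, a ∈ F) ∧ (ys ++ x :: zs).Pairwise sw ∧
    ys.length + zs.length + 1 = k
def step (a b : ℕ × ℕ) : Prop := (b.1 = a.1 + 1 ∧ b.2 = a.2) ∨ (b.1 = a.1 ∧ a.2 = b.2 + 1)
def NPath (m n j : ℕ) (P : Finset (ℕ × ℕ)) : Prop :=
  ∃ f : ℕ → ℕ × ℕ, f j = (j, n - 1) ∧ f (m + n - 2 - j) = (m - 1, j) ∧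
    (∀ s, j ≤ s → s < m + n - 2 - j → step (f s) (f (s + 1))) ∧
    P = (Finset.Icc j (m + n - 2 - j)).image f

lemma sw_trans {a b c : ℕ × ℕ} (h1 : sw a b) (h2 : sw b c) : sw a c :=
  ⟨h1.1.trans h2.1, h1.2.trans h2.2⟩

lemma sw_irrefl (a : ℕ × ℕ) : ¬ sw a a := fun h => lt_irrefl _ h.1

instance : IsIrrefl (ℕ × ℕ) sw := ⟨sw_irrefl⟩

lemma sw_not_pd {a b : ℕ × ℕ} (h : sw a b) : ¬ pd a b ∧ ¬ pd b a := by
  unfold sw pd at *; omega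

lemma incomp_sw {a b : ℕ × ℕ} (h1 : ¬ pd a b) (h2 : ¬ pd b a) : sw a b ∨ sw b a := by
  unfold pd at *; unfold sw; omega

lemma pairwise_symm_mem {l : List (ℕ × ℕ)} (h : l.Pairwise sw) {a b : ℕ × ℕ}
    (ha : a ∈ l) (hb : b ∈ l) (hab : a ≠ b) : sw a b ∨ sw b a := by
  have h' : l.Pairwise (fun a b => sw a b ∨ sw b a) := h.imp Or.inl
  exact @List.Pairwise.forall _ _ _ ⟨fun x y hxy => hxy.elim Or.inr Or.inl⟩ h' _ ha _ hb hab

lemma pairwise_nodup {l : List (ℕ × ℕ)} (h : l.Pairwise sw) : l.Nodup :=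
  h.nodup

section Path

variable {m n j : ℕ} {f : ℕ → ℕ × ℕ}

lemma path_ident (h0 : f j = (j, n - 1))
    (hstep : ∀ s, j ≤ s → s < m + n - 2 - j → step (f s) (f (s + 1))) :
    ∀ s, j ≤ s → s ≤ m + n - 2 - j → (f s).1 + (n - 1) = s + (f s).2 ∧ (f s).2 ≤ n - 1 := by
  intro s hs
  induction s, hs using Nat.le_induction with
  | base => intro _; rw [h0]; simp
  | succ s hs ih =>
    intro hs1
    have h1 := ih (by omega)
    have h2 := hstep s hs (by omega)
    unfold step at h2
    omega

lemma path_mono (hstep : ∀ s, j ≤ s → s < m + n - 2 - j → step (f s) (f (s + 1))) :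
    ∀ s s', j ≤ s → s ≤ s' → s' ≤ m + n - 2 - j → pd (f s) (f s') := by
  intro s s' hs hss'
  induction s', hss' using Nat.le_induction with
  | base => intro _; exact ⟨le_rfl, le_rfl⟩
  | succ s' h ih =>
    intro h1
    have h2 := ih (by omega)
    have h3 := hstep s' (by omega) (by omega)
    unfold pd at *; unfold step at h3; omega

lemma path_bounds (hjm : j + 1 < m) (hjn : j + 1 < n) (h0 : f j = (j, n - 1))
    (hlast : f (m + n - 2 - j) = (m - 1, j))
    (hstep : ∀ s, j ≤ s → s < m + n - 2 - j → step (f s) (f (s + 1))) :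
    ∀ s, j ≤ s → s ≤ m + n - 2 - j →
      j ≤ (f s).1 ∧ (f s).1 ≤ m - 1 ∧ j ≤ (f s).2 ∧ (f s).2 ≤ n - 1 := by
  intro s hs hs'
  have hA := path_mono hstep j s le_rfl hs (by omega)
  have hB := path_mono hstep s (m + n - 2 - j) hs hs' le_rfl
  rw [h0] at hA; rw [hlast] at hB
  unfold pd at hA hB; simp at hA hB; omega

end Path


-- nesting of two disjoint paths
lemma nest2 {m n i j : ℕ} {f g : ℕ → ℕ × ℕ}
    (hij : i < j) (hjn : j + 1 < n)
    (hf0 : f i = (i, n - 1))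
    (hfstep : ∀ s, i ≤ s → s < m + n - 2 - i → step (f s) (f (s + 1)))
    (hg0 : g j = (j, n - 1))
    (hgstep : ∀ s, j ≤ s → s < m + n - 2 - j → step (g s) (g (s + 1)))
    (hne : ∀ s s', i ≤ s → s ≤ m + n - 2 - i → j ≤ s' → s' ≤ m + n - 2 - j → f s ≠ g s') :
    ∀ s, j ≤ s → s ≤ m + n - 2 - j → (f s).1 < (g s).1 := by
  have hfid := path_ident hf0 hfstep
  have hgid := path_ident hg0 hgstep
  intro s hs
  induction s, hs using Nat.le_induction with
  | base =>
    intro _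
    have h1 := hfid j (by omega) (by omega)
    have h2 := hgid j (by omega) (by omega)
    have h3 : f j ≠ g j := hne j j (by omega) (by omega) (by omega) (by omega)
    have hrow : (g j).1 = j := by rw [hg0]
    have hcol2 : (g j).2 = n - 1 := by rw [hg0]
    by_contra hc
    apply h3
    have hr : (f j).1 = (g j).1 := by omega
    have hcol : (f j).2 = (g j).2 := by omega
    exact Prod.ext hr hcol
  | succ s hs1 ih =>
    intro hle
    have h1 := ih (by omega)
    have hfs := hfstep s (by omega) (by omega)
    have hgs := hgstep s (by omega) (by omega)
    have hfi := hfid (s+1) (by omega) (by omega)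
    have hgi := hgid (s+1) (by omega) (by omega)
    have hne' : f (s+1) ≠ g (s+1) :=
      hne (s+1) (s+1) (by omega) (by omega) (by omega) (by omega)
    by_contra hc
    apply hne'
    have hr : (f (s+1)).1 = (g (s+1)).1 := by
      unfold step at hfs hgs; omega
    have hcol : (f (s+1)).2 = (g (s+1)).2 := by omega
    exact Prod.ext hr hcol


section Family

variable {m n t : ℕ} {Q : ℕ → Finset (ℕ × ℕ)} {fs : ℕ → ℕ → ℕ × ℕ}

def FamData (m n t : ℕ) (Q : ℕ → Finset (ℕ × ℕ)) (fs : ℕ → ℕ → ℕ × ℕ) : Prop :=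
  ∀ jj, jj + 1 < t →
    (fs jj jj = (jj, n - 1) ∧ fs jj (m + n - 2 - jj) = (m - 1, jj) ∧
     (∀ s, jj ≤ s → s < m + n - 2 - jj → step (fs jj s) (fs jj (s + 1))) ∧
     Q jj = (Finset.Icc jj (m + n - 2 - jj)).image (fs jj))

lemma fam_mem (hfs : FamData m n t Q fs) {jj s : ℕ} (hj : jj + 1 < t)
    (h1 : jj ≤ s) (h2 : s ≤ m + n - 2 - jj) : fs jj s ∈ Q jj := by
  rw [(hfs jj hj).2.2.2]
  exact Finset.mem_image.mpr ⟨s, Finset.mem_Icc.mpr ⟨h1, h2⟩, rfl⟩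

lemma fam_nest (htn : t ≤ n) (hfs : FamData m n t Q fs)
    (hdisj : ∀ i j, i ≠ j → Disjoint (Q i) (Q j)) :
    ∀ i j, i < j → j + 1 < t → ∀ s, j ≤ s → s ≤ m + n - 2 - j →
      (fs i s).1 < (fs j s).1 := by
  intro i j hij hjt
  have hit : i + 1 < t := by omega
  obtain ⟨hf0, hflast, hfstep, hfQ⟩ := hfs i hit
  obtain ⟨hg0, hglast, hgstep, hgQ⟩ := hfs j hjt
  exact nest2 hij (by omega) hf0 hfstep hg0 hgstep
    (fun s s' h1 h2 h3 h4 heq => by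
      have hm1 : fs i s ∈ Q i := fam_mem hfs hit h1 h2
      have hm2 : fs j s' ∈ Q j := fam_mem hfs hjt h3 h4
      rw [heq] at hm1
      exact (Finset.disjoint_left.mp (hdisj i j (by omega)) hm1) hm2)

lemma fam_rows_ge (htn : t ≤ n) (hfs : FamData m n t Q fs)
    (hdisj : ∀ i j, i ≠ j → Disjoint (Q i) (Q j)) :
    ∀ a b, a ≤ b → b + 1 < t → ∀ s, b ≤ s → s ≤ m + n - 2 - b →
      (fs a s).1 + (b - a) ≤ (fs b s).1 := by
  intro a b hab
  induction b, hab using Nat.le_induction with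
  | base => intro _ s _ _; omega
  | succ b hb ih =>
    intro hbt s hs1 hs2
    have h1 := ih (by omega) s (by omega) (by omega)
    have h2 := fam_nest htn hfs hdisj b (b+1) (by omega) hbt s hs1 hs2
    omega

/-- Low boundary diagonals are covered by the paths. -/
lemma cover_low (htm : t ≤ m) (htn : t ≤ n) (hfs : FamData m n t Q fs)
    (hdisj : ∀ i j, i ≠ j → Disjoint (Q i) (Q j))
    {x : ℕ × ℕ} (hx : box m n 0 x) (ht2 : 2 ≤ t)
    (hs : x.1 + (n - 1 - x.2) + 2 ≤ t) :
    ∃ jj, jj + 1 < t ∧ x ∈ Q jj := by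
  obtain ⟨_, hx1, _, hx2⟩ := hx
  set s := x.1 + (n - 1 - x.2) with hsdef
  have hx1s : x.1 ≤ s := by omega
  have hst : s + 2 ≤ t := hs
  -- rows of all paths jj ≤ s at diagonal s equal jj
  have hrow : ∀ jj, jj ≤ s → (fs jj s).1 = jj := by
    intro jj hjj
    have hjt : jj + 1 < t := by omega
    have hst' : s + 1 < t := by omega
    obtain ⟨h0, hlast, hstep, hQ⟩ := hfs jj hjt
    have hid := path_ident h0 hstep s hjj (by omega)
    -- row ≤ s
    have hle : (fs jj s).1 ≤ s := by omega
    -- (fs s s).1 ≤ s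
    obtain ⟨h0', hlast', hstep', hQ'⟩ := hfs s hst'
    have hid' := path_ident h0' hstep' s (le_refl s) (by omega)
    have hle' : (fs s s).1 ≤ s := by omega
    -- lower: (fs 0 s).1 + jj ≤ (fs jj s).1
    have hlow := fam_rows_ge htn hfs hdisj 0 jj (by omega) hjt s hjj (by omega)
    -- upper: (fs jj s).1 + (s - jj) ≤ (fs s s).1 ≤ s
    have hup := fam_rows_ge htn hfs hdisj jj s hjj hst' s (le_refl s) (by omega)
    omega
  have hx1s' : x.1 + 1 < t := by omega
  refine ⟨x.1, hx1s', ?_⟩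
  obtain ⟨h0, hlast, hstep, hQ⟩ := hfs x.1 hx1s'
  have hid := path_ident h0 hstep s hx1s (by omega)
  have hr := hrow x.1 hx1s
  have hxeq : x = fs x.1 s := by
    have hc : (fs x.1 s).2 = x.2 := by omega
    have : x = ((fs x.1 s).1, (fs x.1 s).2) := by
      rw [hr, hc]
    simpa using this
  have hm := fam_mem hfs hx1s' hx1s (show s ≤ m + n - 2 - x.1 by omega)
  rwa [← hxeq] at hm

/-- High boundary diagonals are covered by the paths. -/
lemma cover_high (htm : t ≤ m) (htn : t ≤ n) (hfs : FamData m n t Q fs)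
    (hdisj : ∀ i j, i ≠ j → Disjoint (Q i) (Q j))
    {x : ℕ × ℕ} (hx : box m n 0 x) (ht2 : 2 ≤ t)
    (hs : m + n - 2 - (x.1 + (n - 1 - x.2)) + 2 ≤ t) :
    ∃ jj, jj + 1 < t ∧ x ∈ Q jj := by
  obtain ⟨_, hx1, _, hx2⟩ := hx
  set s := x.1 + (n - 1 - x.2) with hsdef
  have hsM : s ≤ m + n - 2 := by omega
  set e := m + n - 2 - s with hedef
  have het : e + 2 ≤ t := hs
  have hrow : ∀ jj, jj ≤ e → (fs jj s).1 + (n - 1) = s + jj := by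
    intro jj hjj
    have hjt : jj + 1 < t := by omega
    have het' : e + 1 < t := by omega
    obtain ⟨h0, hlast, hstep, hQ⟩ := hfs jj hjt
    have hjs : jj ≤ s := by omega
    have hid := path_ident h0 hstep s hjs (by omega)
    obtain ⟨h0', hlast', hstep', hQ'⟩ := hfs e het'
    have hid' := path_ident h0' hstep' s (by omega) (by omega)
    have hup := fam_rows_ge htn hfs hdisj jj e hjj het' s (by omega) (by omega)
    have hlow := fam_rows_ge htn hfs hdisj 0 jj (by omega) hjt s hjs (by omega)
    have hbe : (fs e s).1 ≤ m - 1 :=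
      (path_bounds (by omega) (by omega) h0' hlast' hstep' s (by omega) (by omega)).2.1
    obtain ⟨h00, hlast0, hstep0, hQ0⟩ := hfs 0 (by omega)
    have hid0 := path_ident h00 hstep0 s (by omega) (by omega)
    omega
  set jj := x.1 + (n - 1) - s with hjjdef
  have hjje : jj ≤ e := by omega
  have hjt : jj + 1 < t := by omega
  refine ⟨jj, hjt, ?_⟩
  obtain ⟨h0, hlast, hstep, hQ⟩ := hfs jj hjt
  have hjs : jj ≤ s := by omega
  have hid := path_ident h0 hstep s hjs (by omega)
  have hr := hrow jj hjje
  have hxeq : x = fs jj s := by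
    have hr1 : (fs jj s).1 = x.1 := by omega
    have hc : (fs jj s).2 = x.2 := by omega
    have : x = ((fs jj s).1, (fs jj s).2) := by rw [hr1, hc]
    simpa using this
  have hm := fam_mem hfs hjt hjs (show s ≤ m + n - 2 - jj by omega)
  rwa [← hxeq] at hm


lemma fam_comp (hfs : FamData m n t Q fs) {jj : ℕ} (hj : jj + 1 < t)
    {v w : ℕ × ℕ} (hv : v ∈ Q jj) (hw : w ∈ Q jj) : pd v w ∨ pd w v := by
  obtain ⟨h0, hlast, hstep, hQ⟩ := hfs jj hj
  rw [hQ] at hv hw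
  obtain ⟨a, ha, hav⟩ := Finset.mem_image.mp hv
  obtain ⟨b, hb, hbw⟩ := Finset.mem_image.mp hw
  rw [Finset.mem_Icc] at ha hb
  rcases le_total a b with h | h
  · left; rw [← hav, ← hbw]; exact path_mono hstep a b ha.1 h hb.2
  · right; rw [← hav, ← hbw]; exact path_mono hstep b a hb.1 h ha.2

lemma face_union (htm : t ≤ m) (htn : t ≤ n) (ht1 : 1 ≤ t) (hfs : FamData m n t Q fs)
    (hdisj : ∀ i j, i ≠ j → Disjoint (Q i) (Q j)) :
    Face t ((Finset.Ico 0 (t - 1)).biUnion Q) := by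
  intro l hl hmem
  by_contra hc
  push_neg at hc
  have hnd := hl.nodup
  have hcard : t - 1 < l.toFinset.card := by
    rw [List.toFinset_card_of_nodup hnd]; omega
  have hex : ∀ x ∈ l.toFinset, ∃ j, j < t - 1 ∧ x ∈ Q j := by
    intro x hx
    have := hmem x (List.mem_toFinset.mp hx)
    obtain ⟨j, hj, hjx⟩ := Finset.mem_biUnion.mp this
    exact ⟨j, by simpa using (Finset.mem_Ico.mp hj).2, hjx⟩
  classical
  set gidx : ℕ × ℕ → ℕ := fun x => if h : ∃ j, j < t - 1 ∧ x ∈ Q j then h.choose else 0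
    with hgidx
  have hmap : ∀ x ∈ l.toFinset, gidx x ∈ Finset.Ico 0 (t - 1) := by
    intro x hx
    have h := hex x hx
    simp only [hgidx, dif_pos h]
    exact Finset.mem_Ico.mpr ⟨Nat.zero_le _, h.choose_spec.1⟩
  have hcard2 : (Finset.Ico 0 (t - 1)).card < l.toFinset.card := by
    simpa using hcard
  obtain ⟨x, hx, y, hy, hxy, hgeq⟩ :=
    Finset.exists_ne_map_eq_of_card_lt_of_maps_to hcard2 hmap
  have hxex := hex x hx
  have hyex := hex y hy
  have hgx : gidx x = hxex.choose := dif_pos hxex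
  have hgy : gidx y = hyex.choose := dif_pos hyex
  have hxQ : x ∈ Q (gidx x) := by rw [hgx]; exact hxex.choose_spec.2
  have hyQ : y ∈ Q (gidx x) := by rw [hgeq, hgy]; exact hyex.choose_spec.2
  have hjlt : gidx x + 1 < t := by
    rw [hgx]; have := hxex.choose_spec.1; omega
  have hcomp := fam_comp hfs hjlt hxQ hyQ
  have hsw := pairwise_symm_mem hl (List.mem_toFinset.mp hx) (List.mem_toFinset.mp hy) hxy
  rcases hsw with h | h
  · have := sw_not_pd h; tauto
  · have := sw_not_pd h; tauto

lemma tight_union (htm : t ≤ m) (htn : t ≤ n) (ht1 : 1 ≤ t) (hfs : FamData m n t Q fs)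
    (hdisj : ∀ i j, i ≠ j → Disjoint (Q i) (Q j)) :
    Tight m n 0 t ((Finset.Ico 0 (t - 1)).biUnion Q) := by
  intro x hx hxF
  have hbx := hx
  obtain ⟨_, hx1, _, hx2⟩ := hbx
  set s := x.1 + (n - 1 - x.2) with hsdef
  have hxid : x.1 + (n - 1) = s + x.2 := by omega
  have hrange : ∀ jj, jj + 1 < t → jj ≤ s ∧ s ≤ m + n - 2 - jj := by
    intro jj hjj
    constructor
    · by_contra h
      push_neg at h
      have : s + 2 ≤ t := by omega
      obtain ⟨j', hj', hmem'⟩ := cover_low htm htn hfs hdisj hx (by omega) this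
      exact hxF (Finset.mem_biUnion.mpr ⟨j', Finset.mem_Ico.mpr ⟨Nat.zero_le _, by omega⟩, hmem'⟩)
    · by_contra h
      push_neg at h
      have hsM : s ≤ m + n - 2 := by omega
      have : m + n - 2 - s + 2 ≤ t := by omega
      obtain ⟨j', hj', hmem'⟩ := cover_high htm htn hfs hdisj hx (by omega) this
      exact hxF (Finset.mem_biUnion.mpr ⟨j', Finset.mem_Ico.mpr ⟨Nat.zero_le _, by omega⟩, hmem'⟩)
  set g : ℕ → ℕ × ℕ := fun jj => fs jj s with hg
  have hid : ∀ jj, jj < t - 1 →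
      (g jj).1 + (n - 1) = s + (g jj).2 ∧ (g jj).2 ≤ n - 1 := by
    intro jj hjj
    have hjt : jj + 1 < t := by omega
    obtain ⟨h0, hlast, hstep, hQ⟩ := hfs jj hjt
    have := path_ident h0 hstep s (hrange jj hjt).1 (hrange jj hjt).2
    simpa [hg] using this
  have hQmem : ∀ jj, jj < t - 1 → g jj ∈ (Finset.Ico 0 (t - 1)).biUnion Q := by
    intro jj hjj
    have hjt : jj + 1 < t := by omega
    exact Finset.mem_biUnion.mpr ⟨jj, Finset.mem_Ico.mpr ⟨Nat.zero_le _, hjj⟩,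
      fam_mem hfs hjt (hrange jj hjt).1 (hrange jj hjt).2⟩
  have hrow_ne : ∀ jj, jj < t - 1 → (g jj).1 ≠ x.1 := by
    intro jj hjj heq
    apply hxF
    have h1 := hid jj hjj
    have hxeq : g jj = x := by
      have : (g jj).2 = x.2 := by omega
      have h2 : g jj = ((g jj).1, (g jj).2) := rfl
      rw [h2, heq, this]
    rw [← hxeq]
    exact hQmem jj hjj
  have hmono : ∀ a b, a < b → b < t - 1 → (g a).1 < (g b).1 := by
    intro a b hab hbt
    have hbt' : b + 1 < t := by omega
    have := fam_nest htn hfs hdisj a b hab hbt' s (hrange b hbt').1 (hrange b hbt').2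
    simpa [hg] using this
  set ys := ((List.range (t - 1)).filter (fun jj => decide ((g jj).1 < x.1))).map g with hys
  set zs := ((List.range (t - 1)).filter (fun jj => ! decide ((g jj).1 < x.1))).map g with hzs
  have hswlem : ∀ a b : ℕ × ℕ, a.1 + (n - 1) = s + a.2 → b.1 + (n - 1) = s + b.2 →
      a.2 ≤ n - 1 → b.2 ≤ n - 1 → a.1 < b.1 → sw a b := by
    intro a b h1 h2 h3 h4 h5
    exact ⟨h5, by omega⟩
  have hmem_range : ∀ (p : ℕ → Bool) (b : ℕ × ℕ),
      b ∈ ((List.range (t - 1)).filter p).map g → ∃ jj, jj < t - 1 ∧ p jj ∧ b = g jj := by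
    intro p b hb
    obtain ⟨jj, hjj, hjb⟩ := List.mem_map.mp hb
    have h1 := List.mem_filter.mp hjj
    exact ⟨jj, List.mem_range.mp h1.1, h1.2, hjb.symm⟩
  have hpairfilter : ∀ (p : ℕ → Bool),
      (((List.range (t - 1)).filter p).map g).Pairwise sw := by
    intro p
    rw [List.pairwise_map]
    have h1 : ((List.range (t - 1)).filter p).Pairwise (fun a b => a < b) :=
      List.pairwise_lt_range.filter p
    have h2 := List.Pairwise.and_mem.mp h1
    refine h2.imp ?_
    rintro a b ⟨ha, hb, hab⟩
    have ha' := List.mem_range.mp (List.mem_filter.mp ha).1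
    have hb' := List.mem_range.mp (List.mem_filter.mp hb).1
    have hia := hid a ha'
    have hib := hid b hb'
    exact hswlem _ _ hia.1 hib.1 hia.2 hib.2 (hmono a b hab hb')
  refine ⟨ys, zs, ?_, ?_, ?_, ?_⟩
  · intro a ha
    obtain ⟨jj, hjj, _, hb⟩ := hmem_range _ a ha
    rw [hb]; exact hQmem jj hjj
  · intro a ha
    obtain ⟨jj, hjj, _, hb⟩ := hmem_range _ a ha
    rw [hb]; exact hQmem jj hjj
  · rw [List.pairwise_append]
    refine ⟨hpairfilter _, ?_, ?_⟩
    · rw [List.pairwise_cons]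
      refine ⟨?_, hpairfilter _⟩
      intro b hb
      obtain ⟨jj, hjj, hp, hbeq⟩ := hmem_range _ b hb
      have hib := hid jj hjj
      have : ¬ ((g jj).1 < x.1) := by simpa using hp
      have hgt : x.1 < (g jj).1 := by
        have := hrow_ne jj hjj; omega
      rw [hbeq]
      exact hswlem _ _ hxid (hib.1) (by omega) hib.2 hgt
    · intro a ha b hb
      obtain ⟨jj, hjj, hp, haeq⟩ := hmem_range _ a ha
      have hia := hid jj hjj
      have hlt : (g jj).1 < x.1 := by simpa using hp
      rcases List.mem_cons.mp hb with hbx | hbz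
      · rw [haeq, hbx]
        exact hswlem _ _ hia.1 hxid hia.2 (by omega) hlt
      · obtain ⟨jj', hjj', hp', hbeq⟩ := hmem_range _ b hbz
        have hib := hid jj' hjj'
        have : ¬ ((g jj').1 < x.1) := by simpa using hp'
        rw [haeq, hbeq]
        exact hswlem _ _ hia.1 hib.1 hia.2 hib.2 (by omega)
  · have := List.length_eq_length_filter_add (l := List.range (t - 1))
      (fun jj => decide ((g jj).1 < x.1))
    simp only [hys, hzs, List.length_map, List.length_range] at *
    omega

end Family

/-- the set of minimal-layer elements -/
noncomputable def Bset (F : Finset (ℕ × ℕ)) : Finset (ℕ × ℕ) :=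
  F.filter (fun v => ∀ y ∈ F, ¬ sw y v)

lemma mem_Bset {F : Finset (ℕ × ℕ)} {v : ℕ × ℕ} :
    v ∈ Bset F ↔ v ∈ F ∧ ∀ y ∈ F, ¬ sw y v := Finset.mem_filter

/-- diagonal number -/
def dg (n : ℕ) (v : ℕ × ℕ) : ℕ := v.1 + (n - 1 - v.2)

section Aux

variable {m n u k : ℕ} {F : Finset (ℕ × ℕ)}

lemma Bset_comp (hbox : ∀ v ∈ F, box m n u v) {a b : ℕ × ℕ}
    (ha : a ∈ Bset F) (hb : b ∈ Bset F) : pd a b ∨ pd b a := by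
  rcases mem_Bset.mp ha with ⟨haF, ha2⟩
  rcases mem_Bset.mp hb with ⟨hbF, hb2⟩
  by_contra hc
  push_neg at hc
  have h1 : sw a b ∨ sw b a := by
    unfold pd at hc; unfold sw; omega
  rcases h1 with h | h
  · exact hb2 a haF h
  · exact ha2 b hbF h

lemma Bset_min (hbox : ∀ v ∈ F, box m n u v) (hface : Face (k+2) F)
    (htight : Tight m n u (k+2) F) (hm : u + k + 2 ≤ m) (hn : u + k + 2 ≤ n) :
    (u, n - 1) ∈ Bset F := by
  set x : ℕ × ℕ := (u, n - 1) with hx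
  have hxbox : box m n u x := by
    unfold box; simp [hx]; omega
  have hxF : x ∈ F := by
    by_contra hxF
    obtain ⟨ys, zs, hys, hzs, hpw, hlen⟩ := htight x hxbox hxF
    rcases List.pairwise_append.mp hpw with ⟨_, hpw2, hcross⟩
    -- ys must be empty
    have hyse : ys = [] := by
      cases ys with
      | nil => rfl
      | cons a as =>
        exfalso
        have hsw : sw a x := hcross a (List.mem_cons_self) x (List.mem_cons_self)
        have := hbox a (hys a (List.mem_cons_self))
        unfold box at this; unfold sw at hsw
        simp [hx] at hsw
        omega
    have hzse : zs = [] := by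
      cases zs with
      | nil => rfl
      | cons b bs =>
        exfalso
        have hsw : sw x b := (List.pairwise_cons.mp hpw2).1 b (List.mem_cons_self)
        have := hbox b (hzs b (List.mem_cons_self))
        unfold box at this; unfold sw at hsw
        simp [hx] at hsw
        omega
    rw [hyse, hzse] at hlen
    simp only [List.length_nil] at hlen
    omega
  refine mem_Bset.mpr ⟨hxF, ?_⟩
  intro y hyF hsw
  have := hbox y hyF
  unfold box at this; unfold sw at hsw
  simp [hx] at hsw
  omega

lemma Bset_max (hbox : ∀ v ∈ F, box m n u v) (hface : Face (k+2) F)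
    (htight : Tight m n u (k+2) F) (hm : u + k + 2 ≤ m) (hn : u + k + 2 ≤ n) :
    (m - 1, u) ∈ Bset F := by
  set x : ℕ × ℕ := (m - 1, u) with hx
  have hxbox : box m n u x := by
    unfold box; simp [hx]; omega
  have hxF : x ∈ F := by
    by_contra hxF
    obtain ⟨ys, zs, hys, hzs, hpw, hlen⟩ := htight x hxbox hxF
    rcases List.pairwise_append.mp hpw with ⟨_, hpw2, hcross⟩
    have hyse : ys = [] := by
      cases ys with
      | nil => rfl
      | cons a as =>
        exfalso
        have hsw : sw a x := hcross a (List.mem_cons_self) x (List.mem_cons_self)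
        have := hbox a (hys a (List.mem_cons_self))
        unfold box at this; unfold sw at hsw
        simp [hx] at hsw
        omega
    have hzse : zs = [] := by
      cases zs with
      | nil => rfl
      | cons b bs =>
        exfalso
        have hsw : sw x b := (List.pairwise_cons.mp hpw2).1 b (List.mem_cons_self)
        have := hbox b (hzs b (List.mem_cons_self))
        unfold box at this; unfold sw at hsw
        simp [hx] at hsw
        omega
    rw [hyse, hzse] at hlen
    simp only [List.length_nil] at hlen
    omega
  refine mem_Bset.mpr ⟨hxF, ?_⟩
  intro y hyF hsw
  have := hbox y hyF
  unfold box at this; unfold sw at hsw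
  simp [hx] at hsw
  omega


lemma prod_ne {a b : ℕ × ℕ} (h : a ≠ b) : a.1 ≠ b.1 ∨ a.2 ≠ b.2 := by
  by_contra hc
  push_neg at hc
  exact h (Prod.ext hc.1 hc.2)

lemma dg_mono {n : ℕ} {a b : ℕ × ℕ} (ha : a.2 < n) (hb : b.2 < n)
    (hpd : pd a b) (hne : a ≠ b) : dg n a < dg n b := by
  have := prod_ne hne
  unfold pd at hpd; unfold dg; omega

lemma exists_step (hbox : ∀ v ∈ F, box m n u v) (hface : Face (k+2) F)
    (htight : Tight m n u (k+2) F) (hm : u + k + 2 ≤ m) (hn : u + k + 2 ≤ n)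
    {v : ℕ × ℕ} (hv : v ∈ Bset F) (hdv : dg n v < m + n - 2 - u) :
    ∃ w ∈ Bset F, step v w := by
  have hvF := (mem_Bset.mp hv).1
  have hvB := (mem_Bset.mp hv).2
  have hvbox := hbox v hvF
  obtain ⟨hvb1, hvb2, hvb3, hvb4⟩ := hvbox
  have hmaxB := Bset_max (m:=m) (n:=n) (u:=u) (k:=k) hbox hface htight hm hn
  have hmaxF := (mem_Bset.mp hmaxB).1
  set W := (Bset F).filter (fun w => pd v w ∧ v ≠ w) with hW
  have hWne : W.Nonempty := by
    refine ⟨(m-1, u), ?_⟩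
    rw [hW, Finset.mem_filter]
    refine ⟨hmaxB, ⟨⟨by simp; omega, by simp; omega⟩, ?_⟩⟩
    intro hc
    rw [hc] at hdv
    unfold dg at hdv
    simp at hdv
    omega
  obtain ⟨w0, hw0W, hw0min⟩ := Finset.exists_min_image W (dg n) hWne
  rw [hW, Finset.mem_filter] at hw0W
  obtain ⟨hw0B, hpd0, hne0⟩ := hw0W
  have hw0F := (mem_Bset.mp hw0B).1
  have hw0Bp := (mem_Bset.mp hw0B).2
  obtain ⟨hwb1, hwb2, hwb3, hwb4⟩ := hbox w0 hw0F
  by_contra hstep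
  push_neg at hstep
  have hnostep : ¬ step v w0 := fun hs => hstep w0 hw0B hs
  have hbetween : ∀ b ∈ Bset F, pd v b → b ≠ v → pd b w0 → b ≠ w0 → False := by
    intro b hb h1 h2 h3 h4
    have hbW : b ∈ W := by
      rw [hW, Finset.mem_filter]
      exact ⟨hb, h1, fun hc => h2 hc.symm⟩
    have hle := hw0min b hbW
    have hbF := (mem_Bset.mp hb).1
    obtain ⟨_, _, _, hb4⟩ := hbox b hbF
    have := dg_mono hb4 hwb4 h3 h4
    omega
  obtain ⟨hpda, hpdb⟩ := hpd0
  unfold step at hnostep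
  push_neg at hnostep
  rcases Nat.lt_or_ge w0.2 v.2 with hcol | hcol
  · -- Case A : w0.2 < v.2, use x2 = (v.1, v.2 - 1)
    set x2 : ℕ × ℕ := (v.1, v.2 - 1) with hx2
    have hx2box : box m n u x2 := by
      unfold box; simp [hx2]; omega
    by_cases hx2F : x2 ∈ F
    · -- x2 ∈ Bset, strictly between v and w0
      have hx2B : x2 ∈ Bset F := by
        refine mem_Bset.mpr ⟨hx2F, ?_⟩
        intro y hyF hsy
        refine hvB y hyF ?_
        unfold sw at hsy ⊢; simp [hx2] at hsy; omega
      refine hbetween x2 hx2B ⟨by simp [hx2], by simp [hx2] <;> omega⟩ ?_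
        ⟨by simp [hx2] <;> omega, by simp [hx2] <;> omega⟩ ?_
      · intro hc
        have := congrArg Prod.snd hc
        simp [hx2] at this
        omega
      · intro hc
        have h1 := congrArg Prod.fst hc
        have h2 := congrArg Prod.snd hc
        simp [hx2] at h1 h2
        have := hnostep.2 h1.symm
        omega
    · obtain ⟨ys, zs, hys, hzs, hpw, hlen⟩ := htight x2 hx2box hx2F
      rcases List.pairwise_append.mp hpw with ⟨hpwys, hpw2, hcross⟩
      have hyse : ys = [] := by
        cases ys with
        | nil => rfl
        | cons a as =>
          exfalso
          have hsw : sw a x2 := hcross a (List.mem_cons_self) x2 (List.mem_cons_self)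
          refine hvB a (hys a (List.mem_cons_self)) ?_
          unfold sw at hsw ⊢; simp [hx2] at hsw; omega
      rw [hyse] at hlen
      simp only [List.length_nil] at hlen
      cases zs with
      | nil => simp at hlen <;> omega
      | cons z rest =>
        have hswz : sw x2 z := (List.pairwise_cons.mp hpw2).1 z (List.mem_cons_self)
        have hzF : z ∈ F := hzs z (List.mem_cons_self)
        have hz1 : v.1 < z.1 := by unfold sw at hswz; simp [hx2] at hswz; omega
        have hz2 : v.2 ≤ z.2 := by unfold sw at hswz; simp [hx2] at hswz; omega
        have hpwzs : (z :: rest).Pairwise sw := (List.pairwise_cons.mp hpw2).2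
        rcases Nat.lt_or_ge v.2 z.2 with hz2' | hz2'
        · -- v :: z :: rest is a chain of length k+2 in F
          have : (v :: z :: rest).Pairwise sw := by
            rw [List.pairwise_cons]
            refine ⟨?_, hpwzs⟩
            intro b hb
            rcases List.mem_cons.mp hb with rfl | hbr
            · exact ⟨hz1, hz2'⟩
            · have := (List.pairwise_cons.mp hpwzs).1 b hbr
              exact sw_trans ⟨hz1, hz2'⟩ this
          have hlt := hface (v :: z :: rest) this
            (by
              intro a ha
              rcases List.mem_cons.mp ha with rfl | ha'
              · exact hvF
              · exact hzs a ha')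
          simp at hlt hlen
          omega
        · -- z.2 = v.2
          have hz2e : z.2 = v.2 := by omega
          have hzB : z ∈ Bset F := by
            refine mem_Bset.mpr ⟨hzF, ?_⟩
            intro y hyF hsy
            have : (y :: z :: rest).Pairwise sw := by
              rw [List.pairwise_cons]
              refine ⟨?_, hpwzs⟩
              intro b hb
              rcases List.mem_cons.mp hb with rfl | hbr
              · exact hsy
              · exact sw_trans hsy ((List.pairwise_cons.mp hpwzs).1 b hbr)
            have hlt := hface (y :: z :: rest) this
              (by
                intro a ha
                rcases List.mem_cons.mp ha with rfl | ha'
                · exact hyF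
                · exact hzs a ha')
            simp at hlt hlen
            omega
          rcases Nat.lt_or_ge w0.1 z.1 with hzw | hzw
          · -- w0 is sw-below z, contradicting z ∈ Bset
            exact (mem_Bset.mp hzB).2 w0 hw0F ⟨hzw, by omega⟩
          · -- z strictly between v and w0
            refine hbetween z hzB ⟨by omega, by omega⟩ ?_ ⟨hzw, by omega⟩ ?_
            · intro hc; rw [hc] at hz1; omega
            · intro hc; rw [hc] at hz2e; omega
  · -- Case B : w0.2 = v.2 and w0.1 ≥ v.1 + 2, use x1 = (v.1 + 1, v.2)
    have hcole : w0.2 = v.2 := by omega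
    have hrow2 : v.1 + 2 ≤ w0.1 := by
      have h1 : w0.1 ≠ v.1 + 1 := fun hc => hnostep.1 hc hcole
      rcases prod_ne hne0 with h | h <;> omega
    set x1 : ℕ × ℕ := (v.1 + 1, v.2) with hx1
    have hx1box : box m n u x1 := by
      unfold box; simp [hx1]; omega
    have hyprop : ∀ y, y ∈ F → sw y x1 → y.1 = v.1 ∧ y.2 < v.2 := by
      intro y hyF hsy
      unfold sw at hsy; simp [hx1] at hsy
      by_cases h : y.1 = v.1
      · exact ⟨h, hsy.2⟩
      · exfalso; exact hvB y hyF ⟨by omega, hsy.2⟩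
    have hyB : ∀ y, y ∈ F → y.1 = v.1 → y.2 < v.2 → False := by
      -- such y is in Bset but incomparable with w0
      intro y hyF hy1 hy2
      have hyBs : y ∈ Bset F := by
        refine mem_Bset.mpr ⟨hyF, ?_⟩
        intro z hzF hsz
        unfold sw at hsz
        exact hvB z hzF ⟨by omega, by omega⟩
      have := Bset_comp hbox hyBs hw0B
      unfold pd at this
      omega
    by_cases hx1F : x1 ∈ F
    · by_cases hlo : ∃ y ∈ F, sw y x1
      · obtain ⟨y, hyF, hysw⟩ := hlo
        have := hyprop y hyF hysw
        exact hyB y hyF this.1 this.2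
      · push_neg at hlo
        have hx1B : x1 ∈ Bset F := mem_Bset.mpr ⟨hx1F, hlo⟩
        refine hbetween x1 hx1B ⟨by simp [hx1] <;> omega, by simp [hx1] <;> omega⟩ ?_
          ⟨by simp [hx1] <;> omega, by simp [hx1] <;> omega⟩ ?_
        · intro hc
          have := congrArg Prod.fst hc
          simp [hx1] at this
        · intro hc
          have := congrArg Prod.fst hc
          simp [hx1] at this
          omega
    · obtain ⟨ys, zs, hys, hzs, hpw, hlen⟩ := htight x1 hx1box hx1F
      rcases List.pairwise_append.mp hpw with ⟨hpwys, hpw2, hcross⟩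
      cases ys with
      | nil =>
        simp only [List.length_nil] at hlen
        cases zs with
        | nil => simp at hlen <;> omega
        | cons z rest =>
          have hallz : ∀ b ∈ z :: rest, sw x1 b := (List.pairwise_cons.mp hpw2).1
          have : (v :: z :: rest).Pairwise sw := by
            rw [List.pairwise_cons]
            refine ⟨?_, (List.pairwise_cons.mp hpw2).2⟩
            intro b hb
            have := hallz b hb
            unfold sw at this ⊢; simp [hx1] at this; omega
          have hlt := hface (v :: z :: rest) this
            (by
              intro a ha
              rcases List.mem_cons.mp ha with rfl | ha'
              · exact hvF
              · exact hzs a ha')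
          simp at hlt hlen
          omega
      | cons y ytail =>
        cases ytail with
        | nil =>
          have hsw : sw y x1 := hcross y (List.mem_cons_self) x1 (List.mem_cons_self)
          have := hyprop y (hys y (List.mem_cons_self)) hsw
          exact hyB y (hys y (List.mem_cons_self)) this.1 this.2
        | cons y' ytail2 =>
          have hsw1 : sw y x1 := hcross y (List.mem_cons_self) x1 (List.mem_cons_self)
          have hsw2 : sw y' x1 := hcross y' (by simp) x1 (List.mem_cons_self)
          have h1 := hyprop y (hys y (List.mem_cons_self)) hsw1
          have h2 := hyprop y' (hys y' (by simp)) hsw2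
          have hyy : sw y y' := (List.pairwise_cons.mp hpwys).1 y' (by simp)
          unfold sw at hyy
          omega



lemma bpath (hbox : ∀ v ∈ F, box m n u v) (hface : Face (k+2) F)
    (htight : Tight m n u (k+2) F) (hm : u + k + 2 ≤ m) (hn : u + k + 2 ≤ n) :
    NPath m n u (Bset F) := by
  have hminB := Bset_min (m:=m) (n:=n) (u:=u) (k:=k) hbox hface htight hm hn
  set g : ℕ → ℕ × ℕ := fun i => Nat.rec (motive := fun _ => ℕ × ℕ) (u, n-1)
    (fun _ prev => if h : ∃ w ∈ Bset F, step prev w then h.choose else prev) i with hg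
  have hg0 : g 0 = (u, n - 1) := rfl
  have hgs : ∀ i, g (i+1) =
      if h : ∃ w ∈ Bset F, step (g i) w then h.choose else g i := fun i => rfl
  have hinv : ∀ i, u + i ≤ m + n - 2 - u →
      g i ∈ Bset F ∧ dg n (g i) = u + i ∧ (0 < i → step (g (i-1)) (g i)) := by
    intro i
    induction i with
    | zero =>
      intro _
      refine ⟨hminB, ?_, fun h => absurd h (by simp)⟩
      rw [hg0]; unfold dg; simp
    | succ i ih =>
      intro hle
      obtain ⟨hB, hdg, _⟩ := ih (by omega)
      have hex : ∃ w ∈ Bset F, step (g i) w :=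
        exists_step hbox hface htight hm hn hB (by omega)
      rw [hgs i, dif_pos hex]
      obtain ⟨hwB, hwstep⟩ := hex.choose_spec
      have hb1 := hbox _ ((mem_Bset.mp hB).1)
      have hb2 := hbox _ ((mem_Bset.mp hwB).1)
      refine ⟨hwB, ?_, ?_⟩
      · generalize hex.choose = w at hwstep hb2 ⊢
        unfold step at hwstep; unfold dg at *; unfold box at hb1 hb2; omega
      · intro _
        simp only [Nat.add_sub_cancel]
        exact hwstep
  refine ⟨fun s => g (s - u), by show g (u - u) = (u, n - 1); rw [Nat.sub_self, hg0], ?_, ?_, ?_⟩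
  · show g (m + n - 2 - u - u) = (m - 1, u)
    have h1 := hinv (m + n - 2 - u - u) (by omega)
    have hb := hbox _ ((mem_Bset.mp h1.1).1)
    have h2 := h1.2.1
    have heq : u + (m + n - 2 - u - u) = m + n - 2 - u := by omega
    rw [heq] at h2
    unfold dg at h2; unfold box at hb
    have e1 : (g (m + n - 2 - u - u)).1 = m - 1 := by omega
    have e2 : (g (m + n - 2 - u - u)).2 = u := by omega
    exact Prod.ext e1 e2
  · intro s hs1 hs2
    have h1 := hinv (s + 1 - u) (by omega)
    have := h1.2.2 (by omega)
    have e1 : s + 1 - u - 1 = s - u := by omega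
    rw [e1] at this
    show step (g (s - u)) (g (s + 1 - u))
    exact this
  · ext b
    simp only [Finset.mem_image, Finset.mem_Icc]
    constructor
    · intro hbB
      have hbb := hbox _ (mem_Bset.mp hbB).1
      unfold box at hbb
      refine ⟨dg n b, ⟨by unfold dg; omega, by unfold dg; omega⟩, ?_⟩
      have h1 := hinv (dg n b - u) (by unfold dg at *; omega)
      have heq : u + (dg n b - u) = dg n b := by unfold dg; omega
      rw [heq] at h1
      have hcomp := Bset_comp hbox h1.1 hbB
      have hbb2 := hbox _ (mem_Bset.mp h1.1).1
      unfold box at hbb2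
      by_contra hne
      rcases hcomp with h | h
      · have := dg_mono (n:=n) (by omega) (by omega) h hne
        omega
      · have := dg_mono (n:=n) (by omega) (by omega) h (fun hc => hne hc.symm)
        omega
    · rintro ⟨s, ⟨h1, h2⟩, rfl⟩
      exact (hinv (s - u) (by omega)).1


lemma boxw {x : ℕ × ℕ} (h : box m n (u+1) x) : box m n u x := by
  unfold box at *; omega

lemma Fprime_box (hbox : ∀ v ∈ F, box m n u v) :
    ∀ v ∈ F \ Bset F, box m n (u+1) v := by
  intro v hv
  rw [Finset.mem_sdiff] at hv
  obtain ⟨hvF, hvB⟩ := hv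
  obtain ⟨h1, h2, h3, h4⟩ := hbox v hvF
  have hv1 : v.1 ≠ u := by
    intro hc
    refine hvB (mem_Bset.mpr ⟨hvF, fun y hy hs => ?_⟩)
    have := (hbox y hy).1
    unfold sw at hs; omega
  have hv2 : v.2 ≠ u := by
    intro hc
    refine hvB (mem_Bset.mpr ⟨hvF, fun y hy hs => ?_⟩)
    have := (hbox y hy).2.2.1
    unfold sw at hs; omega
  exact ⟨by omega, h2, by omega, h4⟩

lemma Fprime_face (hface : Face (k+2) F) : Face (k+1) (F \ Bset F) := by
  intro l hl hmem
  by_contra hc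
  push_neg at hc
  cases l with
  | nil => simp at hc
  | cons z rest =>
    have hzF' := hmem z (List.mem_cons_self)
    rw [Finset.mem_sdiff] at hzF'
    have hex : ∃ y ∈ F, sw y z := by
      by_contra hno
      push_neg at hno
      exact hzF'.2 (mem_Bset.mpr ⟨hzF'.1, fun y hy => hno y hy⟩)
    obtain ⟨y, hyF, hys⟩ := hex
    have hpw : (y :: z :: rest).Pairwise sw := by
      rw [List.pairwise_cons]
      refine ⟨?_, hl⟩
      intro b hb
      rcases List.mem_cons.mp hb with rfl | hbr
      · exact hys
      · exact sw_trans hys ((List.pairwise_cons.mp hl).1 b hbr)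
    have hlt := hface _ hpw (by
      intro a ha
      rcases List.mem_cons.mp ha with rfl | ha'
      · exact hyF
      · exact (Finset.mem_sdiff.mp (hmem a ha')).1)
    simp at hlt hc
    omega

lemma Fprime_tight (hbox : ∀ v ∈ F, box m n u v) (hface : Face (k+2) F)
    (htight : Tight m n u (k+2) F) (hm : u + k + 2 ≤ m) (hn : u + k + 2 ≤ n) :
    Tight m n (u+1) (k+1) (F \ Bset F) := by
  intro x hxbox hxF'
  by_cases hxF : x ∈ F
  · -- then x ∈ Bset F
    have hxB : x ∈ Bset F := by
      by_contra h
      exact hxF' (Finset.mem_sdiff.mpr ⟨hxF, h⟩)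
    obtain ⟨hb1, hb2, hb3, hb4⟩ := hxbox
    set xm : ℕ × ℕ := (x.1 - 1, x.2 - 1) with hxm
    have hxmbox : box m n u xm := by unfold box; simp [hxm]; omega
    have hxmF : xm ∉ F := by
      intro hc
      exact (mem_Bset.mp hxB).2 xm hc ⟨by simp [hxm]; omega, by simp [hxm]; omega⟩
    obtain ⟨ys, zs, hys, hzs, hpw, hlen⟩ := htight xm hxmbox hxmF
    rcases List.pairwise_append.mp hpw with ⟨hpwys, hpw2, hcross⟩
    have hyse : ys = [] := by
      cases ys with
      | nil => rfl
      | cons a as =>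
        exfalso
        have hsw : sw a xm := hcross a (List.mem_cons_self) xm (List.mem_cons_self)
        have hswx : sw a x := by
          unfold sw at hsw ⊢; simp [hxm] at hsw; omega
        exact (mem_Bset.mp hxB).2 a (hys a (List.mem_cons_self)) hswx
    rw [hyse] at hlen
    simp only [List.length_nil] at hlen
    rcases Nat.eq_zero_or_pos k with hk0 | hkpos
    · refine ⟨[], [], by simp, by simp, by simp, by simp only [List.length_nil]; omega⟩
    · cases zs with
      | nil => simp at hlen <;> omega
      | cons z1 ztail =>
        cases ztail with
        | nil => simp at hlen <;> omega
        | cons z2 rest =>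
          have hz1sw : sw xm z1 := (List.pairwise_cons.mp hpw2).1 z1 (by simp)
          have hpwz : (z1 :: z2 :: rest).Pairwise sw := (List.pairwise_cons.mp hpw2).2
          have hz1z : ∀ b ∈ z2 :: rest, sw z1 b := (List.pairwise_cons.mp hpwz).1
          refine ⟨[], z2 :: rest, by simp, ?_, ?_, ?_⟩
          · intro a ha
            refine Finset.mem_sdiff.mpr ⟨hzs a (by simp [List.mem_cons] at ha ⊢; tauto), ?_⟩
            intro haB
            have := (mem_Bset.mp haB).2 z1 (hzs z1 (by simp)) (hz1z a ha)
            exact this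
          · simp only [List.nil_append]
            rw [List.pairwise_cons]
            refine ⟨?_, (List.pairwise_cons.mp hpwz).2⟩
            intro b hb
            have h1 := hz1z b hb
            have h2 := hz1sw
            unfold sw at h1 h2 ⊢; simp [hxm] at h2; omega
          · simp at hlen ⊢; omega
  · -- x ∉ F
    obtain ⟨ys, zs, hys, hzs, hpw, hlen⟩ := htight x (boxw hxbox) hxF
    rcases List.pairwise_append.mp hpw with ⟨hpwys, hpw2, hcross⟩
    have hpwzs : zs.Pairwise sw := (List.pairwise_cons.mp hpw2).2
    have huniqY : ∀ a ∈ ys, ∀ b ∈ ys, a ∈ Bset F → b ∈ Bset F → a = b := by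
      intro a ha b hb haB hbB
      by_contra hne
      rcases pairwise_symm_mem hpwys ha hb hne with h | h
      · have := Bset_comp hbox haB hbB
        unfold sw at h; unfold pd at this; omega
      · have := Bset_comp hbox haB hbB
        unfold sw at h; unfold pd at this; omega
    have huniqZ : ∀ a ∈ zs, ∀ b ∈ zs, a ∈ Bset F → b ∈ Bset F → a = b := by
      intro a ha b hb haB hbB
      by_contra hne
      rcases pairwise_symm_mem hpwzs ha hb hne with h | h
      · have := Bset_comp hbox haB hbB
        unfold sw at h; unfold pd at this; omega
      · have := Bset_comp hbox haB hbB
        unfold sw at h; unfold pd at this; omega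
    have hcrossB : ∀ a ∈ ys, ∀ b ∈ zs, a ∈ Bset F → b ∈ Bset F → False := by
      intro a ha b hb haB hbB
      have hsw : sw a b := hcross a ha b (List.mem_cons_of_mem _ hb)
      have := Bset_comp hbox haB hbB
      unfold sw at hsw; unfold pd at this; omega
    by_cases hBys : ∃ b ∈ ys, b ∈ Bset F
    · obtain ⟨b, hbys, hbB⟩ := hBys
      obtain ⟨as, cs, rfl⟩ := List.append_of_mem hbys
      have hbnotin : b ∉ as ++ cs := (List.nodup_cons.mp (List.nodup_middle.mp hpwys.nodup)).1
      refine ⟨as ++ cs, zs, ?_, ?_, ?_, ?_⟩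
      · intro a ha
        have hays : a ∈ as ++ b :: cs := by
          simp [List.mem_append, List.mem_cons] at ha ⊢; tauto
        refine Finset.mem_sdiff.mpr ⟨hys a hays, fun haB => ?_⟩
        have : a = b := huniqY a hays b hbys haB hbB
        rw [this] at ha
        exact hbnotin ha
      · intro a ha
        refine Finset.mem_sdiff.mpr ⟨hzs a ha, fun haB => ?_⟩
        exact hcrossB b hbys a ha hbB haB
      · refine List.Pairwise.sublist ?_ hpw
        exact ((List.sublist_cons_self b cs).append_left as).append_right _
      · simp at hlen ⊢; omega
    · push_neg at hBys
      by_cases hBzs : ∃ b ∈ zs, b ∈ Bset F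
      · obtain ⟨b, hbzs, hbB⟩ := hBzs
        obtain ⟨as, cs, rfl⟩ := List.append_of_mem hbzs
        have hbnotin : b ∉ as ++ cs := (List.nodup_cons.mp (List.nodup_middle.mp hpwzs.nodup)).1
        refine ⟨ys, as ++ cs, ?_, ?_, ?_, ?_⟩
        · intro a ha
          exact Finset.mem_sdiff.mpr ⟨hys a ha, fun haB => hBys a ha haB⟩
        · intro a ha
          have hazs : a ∈ as ++ b :: cs := by
            simp [List.mem_append, List.mem_cons] at ha ⊢; tauto
          refine Finset.mem_sdiff.mpr ⟨hzs a hazs, fun haB => ?_⟩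
          have : a = b := huniqZ a hazs b hbzs haB hbB
          rw [this] at ha
          exact hbnotin ha
        · refine List.Pairwise.sublist ?_ hpw
          exact (((List.sublist_cons_self b cs).append_left as).cons₂ x).append_left ys
        · simp at hlen ⊢; omega
      · push_neg at hBzs
        cases ys with
        | cons y ytail =>
          refine ⟨ytail, zs, ?_, ?_, ?_, ?_⟩
          · intro a ha
            exact Finset.mem_sdiff.mpr ⟨hys a (List.mem_cons_of_mem _ ha),
              fun haB => hBys a (List.mem_cons_of_mem _ ha) haB⟩
          · intro a ha
            exact Finset.mem_sdiff.mpr ⟨hzs a ha, fun haB => hBzs a ha haB⟩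
          · refine List.Pairwise.sublist ?_ hpw
            exact (List.sublist_cons_self y ytail).append_right _
          · simp at hlen ⊢; omega
        | nil =>
          cases zs with
          | nil => simp at hlen <;> omega
          | cons z ztail =>
            refine ⟨[], ztail, by simp, ?_, ?_, ?_⟩
            · intro a ha
              exact Finset.mem_sdiff.mpr ⟨hzs a (List.mem_cons_of_mem _ ha),
                fun haB => hBzs a (List.mem_cons_of_mem _ ha) haB⟩
            · refine List.Pairwise.sublist ?_ hpw
              simp only [List.nil_append]
              exact (List.sublist_cons_self z ztail).cons₂ x
            · simp at hlen ⊢; omega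


lemma aux (m n : ℕ) : ∀ k u (F : Finset (ℕ × ℕ)), u + k ≤ m → u + k ≤ n →
    (∀ v ∈ F, box m n u v) → Face k F → Tight m n u k F →
    ∃ Q : ℕ → Finset (ℕ × ℕ),
      (∀ j, (j < u ∨ u + k ≤ j + 1) → Q j = ∅) ∧
      (∀ j, u ≤ j → j + 1 < u + k → NPath m n j (Q j)) ∧
      (∀ i j, i ≠ j → Disjoint (Q i) (Q j)) ∧
      F = (Finset.Ico u (u + k - 1)).biUnion Q := by
  intro k
  induction k with
  | zero =>
    intro u F _ _ _ hface _
    exact absurd (hface [] (by simp) (by simp)) (by simp)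
  | succ k ih =>
    intro u F hm hn hbox hface htight
    match k, ih with
    | 0, _ =>
      have hFe : F = ∅ := by
        rw [Finset.eq_empty_iff_forall_notMem]
        intro v hv
        have := hface [v] (by simp) (by simpa using hv)
        simp at this
      refine ⟨fun _ => ∅, fun _ _ => rfl, ?_, ?_, ?_⟩
      · intro j h1 h2; omega
      · intro i j _; simp
      · simp [hFe]
    | k + 1, ih =>
      have hm' : u + k + 2 ≤ m := by omega
      have hn' : u + k + 2 ≤ n := by omega
      have hface' : Face (k + 2) F := hface
      have htight' : Tight m n u (k + 2) F := htight
      have hpathB : NPath m n u (Bset F) := bpath hbox hface' htight' hm' hn'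
      have hbox' := Fprime_box (u := u) hbox
      have hface2 : Face (k + 1) (F \ Bset F) := Fprime_face hface'
      have htight2 : Tight m n (u+1) (k+1) (F \ Bset F) :=
        Fprime_tight hbox hface' htight' hm' hn'
      obtain ⟨Q', hQ0, hQpath, hQdisj, hQeq⟩ :=
        ih (u+1) (F \ Bset F) (by omega) (by omega) hbox' hface2 htight2
      have hQsub : ∀ j, u + 1 ≤ j → j + 1 < u + 1 + (k + 1) → Q' j ⊆ F \ Bset F := by
        intro j h1 h2
        rw [hQeq]
        intro a ha
        exact Finset.mem_biUnion.mpr ⟨j, Finset.mem_Ico.mpr ⟨h1, by omega⟩, ha⟩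
      have hQsub' : ∀ j, j ≠ u → Disjoint (Bset F) (Q' j) := by
        intro j hj
        by_cases hcond : u + 1 ≤ j ∧ j + 1 < u + 1 + (k + 1)
        · refine Finset.disjoint_left.mpr ?_
          intro a haB haQ
          exact (Finset.mem_sdiff.mp (hQsub j hcond.1 hcond.2 haQ)).2 haB
        · have : Q' j = ∅ := hQ0 j (by omega)
          simp [this]
      refine ⟨Function.update Q' u (Bset F), ?_, ?_, ?_, ?_⟩
      · intro j hj
        have hju : j ≠ u := by omega
        rw [Function.update_of_ne hju]
        exact hQ0 j (by omega)
      · intro j hj1 hj2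
        rcases eq_or_ne j u with rfl | hne
        · rw [Function.update_self]; exact hpathB
        · rw [Function.update_of_ne hne]
          exact hQpath j (by omega) (by omega)
      · intro i j hij
        rcases eq_or_ne i u with rfl | hi
        · rw [Function.update_self, Function.update_of_ne (Ne.symm hij)]
          exact hQsub' j (Ne.symm hij)
        · rcases eq_or_ne j u with rfl | hj
          · rw [Function.update_self, Function.update_of_ne hi]
            exact (hQsub' i hi).symm
          · rw [Function.update_of_ne hi, Function.update_of_ne hj]
            exact hQdisj i j hij
      · have hico : Finset.Ico u (u + (k + 1 + 1) - 1) =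
            insert u (Finset.Ico (u+1) (u + 1 + (k + 1) - 1)) := by
          ext a
          simp [Finset.mem_Ico, Finset.mem_insert]
          omega
        rw [hico, Finset.biUnion_insert, Function.update_self]
        have hbi : (Finset.Ico (u+1) (u + 1 + (k + 1) - 1)).biUnion (Function.update Q' u (Bset F)) =
            (Finset.Ico (u+1) (u + 1 + (k + 1) - 1)).biUnion Q' := by
          refine Finset.biUnion_congr rfl ?_
          intro j hj
          have : j ≠ u := by
            have := (Finset.mem_Ico.mp hj).1; omega
          rw [Function.update_of_ne this]
        rw [hbi, ← hQeq]
        have hBsub : Bset F ⊆ F := Finset.filter_subset _ _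
        rw [Finset.union_sdiff_of_subset hBsub]

end Aux


/-- embedding into ℕ × ℕ -/
def em (m n : ℕ) (v : Fin m × Fin n) : ℕ × ℕ := ((v.1 : ℕ), (v.2 : ℕ))

lemma em_inj {m n : ℕ} : Function.Injective (em m n) := by
  intro a b h
  unfold em at h
  have h1 := congrArg Prod.fst h
  have h2 := congrArg Prod.snd h
  simp at h1 h2
  exact Prod.ext (Fin.ext h1) (Fin.ext h2)

lemma pord_pd {m n : ℕ} (v w : Fin m × Fin n) : pordLe v w ↔ pd (em m n v) (em m n w) :=
  Iff.rfl

lemma sortAntichain (S : Finset (ℕ × ℕ))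
    (hS : ∀ x ∈ S, ∀ y ∈ S, x ≠ y → sw x y ∨ sw y x) :
    ∃ l : List (ℕ × ℕ), l.Pairwise sw ∧ (∀ x, x ∈ l ↔ x ∈ S) ∧ l.length = S.card := by
  revert hS
  induction S using Finset.strongInduction with
  | _ S ih =>
    intro hS
    rcases S.eq_empty_or_nonempty with rfl | hne
    · exact ⟨[], by simp, by simp, by simp⟩
    · obtain ⟨v, hv, hmin⟩ := Finset.exists_min_image S Prod.fst hne
      obtain ⟨l', h1, h2, h3⟩ := ih (S.erase v) (Finset.erase_ssubset hv)
        (fun x hx y hy => hS x (Finset.mem_of_mem_erase hx) y (Finset.mem_of_mem_erase hy))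
      refine ⟨v :: l', ?_, ?_, ?_⟩
      · rw [List.pairwise_cons]
        refine ⟨?_, h1⟩
        intro b hb
        have hbS := (h2 b).mp hb
        have hbne : b ≠ v := (Finset.mem_erase.mp hbS).1
        have hbS' := Finset.mem_of_mem_erase hbS
        rcases hS v hv b hbS' (Ne.symm hbne) with h | h
        · exact h
        · exfalso; have := hmin b hbS'; unfold sw at h; omega
      · intro x
        simp only [List.mem_cons, h2 x, Finset.mem_erase]
        constructor
        · rintro (rfl | ⟨_, h⟩)
          · exact hv
          · exact h
        · intro hxS
          by_cases hxv : x = v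
          · exact Or.inl hxv
          · exact Or.inr ⟨hxv, hxS⟩
      · simp only [List.length_cons, h3, Finset.card_erase_of_mem hv]
        have := Finset.card_pos.mpr hne
        omega

lemma face_transfer {m n t : ℕ} (F : Finset (Fin m × Fin n)) :
    IsFaceDelta t F ↔ Face t (F.image (em m n)) := by
  constructor
  · intro hface l hpw hmem
    by_contra hlen
    push_neg at hlen
    set l' := l.take t with hl'
    have hpw' : l'.Pairwise sw := hpw.sublist (List.take_sublist _ _)
    have hlen' : l'.length = t := by simp [hl']; omega
    have hsub : l'.toFinset ⊆ F.image (em m n) := by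
      intro a ha
      exact hmem a (List.mem_of_mem_take (List.mem_toFinset.mp ha))
    obtain ⟨A, hAsub, hAim⟩ := Finset.subset_image_iff.mp hsub
    apply hface
    refine ⟨A, hAsub, ?_, ?_⟩
    · have hcard : (A.image (em m n)).card = A.card :=
        Finset.card_image_of_injective _ em_inj
      rw [hAim] at hcard
      rw [← hcard, List.toFinset_card_of_nodup hpw'.nodup, hlen']
    · intro x hx y hy hxy
      have hx' : em m n x ∈ l' := by
        rw [← List.mem_toFinset, ← hAim]
        exact Finset.mem_image_of_mem _ hx
      have hy' : em m n y ∈ l' := by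
        rw [← List.mem_toFinset, ← hAim]
        exact Finset.mem_image_of_mem _ hy
      have hne : em m n x ≠ em m n y := fun h => hxy (em_inj h)
      rcases pairwise_symm_mem hpw' hx' hy' hne with h | h
      · exact ⟨(sw_not_pd h).1, (sw_not_pd h).2⟩
      · exact ⟨(sw_not_pd h).2, (sw_not_pd h).1⟩
  · intro hface hA
    obtain ⟨A, hAsub, hAcard, hAanti⟩ := hA
    have hS : ∀ x ∈ A.image (em m n), ∀ y ∈ A.image (em m n), x ≠ y → sw x y ∨ sw y x := by
      intro x hx y hy hxy
      obtain ⟨a, ha, rfl⟩ := Finset.mem_image.mp hx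
      obtain ⟨b, hb, rfl⟩ := Finset.mem_image.mp hy
      have hab : a ≠ b := fun h => hxy (by rw [h])
      have := hAanti a ha b hb hab
      exact incomp_sw this.1 this.2
    obtain ⟨l, hpw, hmem, hlen⟩ := sortAntichain _ hS
    have hlt := hface l hpw (fun x hx => by
      obtain ⟨a, ha, rfl⟩ := Finset.mem_image.mp ((hmem x).mp hx)
      exact Finset.mem_image_of_mem _ (hAsub ha))
    rw [hlen, Finset.card_image_of_injective _ em_inj, hAcard] at hlt
    omega




lemma ispath_to_npath {m n : ℕ} {i : ℕ} (him : i + 1 < m) (hin : i + 1 < n)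
    {P : Finset (Fin m × Fin n)} {A B : Fin m × Fin n}
    (hA1 : (A.1 : ℕ) = i) (hA2 : (A.2 : ℕ) = n - 1) (hB1 : (B.1 : ℕ) = m - 1)
    (hB2 : (B.2 : ℕ) = i) (h : IsPath P A B) : NPath m n i (P.image (em m n)) := by
  obtain ⟨d, p, h0, hl, hstep, hP⟩ := h
  have hstepv : ∀ jj (hjj : jj < d),
      ((p ⟨jj+1, by omega⟩).1 : ℕ) = ((p ⟨jj, by omega⟩).1 : ℕ) + 1 ∧
        ((p ⟨jj+1, by omega⟩).2 : ℕ) = ((p ⟨jj, by omega⟩).2 : ℕ) ∨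
      ((p ⟨jj+1, by omega⟩).1 : ℕ) = ((p ⟨jj, by omega⟩).1 : ℕ) ∧
        ((p ⟨jj, by omega⟩).2 : ℕ) = ((p ⟨jj+1, by omega⟩).2 : ℕ) + 1 := by
    intro jj hjj
    have hs := hstep ⟨jj, hjj⟩
    have e1 : (⟨jj, hjj⟩ : Fin d).succ = ⟨jj + 1, by omega⟩ := rfl
    have e2 : (⟨jj, hjj⟩ : Fin d).castSucc = ⟨jj, by omega⟩ := rfl
    rw [e1, e2] at hs
    rcases hs with ⟨ha, hb⟩ | ⟨ha, hb⟩
    · exact Or.inl ⟨ha, congrArg Fin.val hb⟩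
    · exact Or.inr ⟨congrArg Fin.val ha, hb⟩
  have hdiag : ∀ jj (hjj : jj < d + 1),
      ((p ⟨jj, hjj⟩).1 : ℕ) + (n - 1) = (i + jj) + ((p ⟨jj, hjj⟩).2 : ℕ) := by
    intro jj
    induction jj with
    | zero =>
      intro hjj
      have e0 : (⟨0, hjj⟩ : Fin (d+1)) = 0 := rfl
      rw [e0, h0]
      omega
    | succ jj ih =>
      intro hjj
      have h1 := ih (by omega)
      have h2 := hstepv jj (by omega)
      have hb2 := ((p ⟨jj, by omega⟩).2 : ℕ).zero_le
      have hbn : ((p ⟨jj+1, hjj⟩).2 : ℕ) < n := (p ⟨jj+1, hjj⟩).2.isLt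
      omega
  have hlv : ((p ⟨d, by omega⟩).1 : ℕ) = m - 1 ∧ ((p ⟨d, by omega⟩).2 : ℕ) = i := by
    have e : (⟨d, by omega⟩ : Fin (d+1)) = Fin.last d := rfl
    rw [e, hl]
    exact ⟨hB1, hB2⟩
  have hd : i + d = m + n - 2 - i := by
    have h1 := hdiag d (by omega)
    have := hlv
    omega
  set f : ℕ → ℕ × ℕ := fun s =>
    if h : i ≤ s ∧ s ≤ m + n - 2 - i then em m n (p ⟨s - i, by omega⟩) else (0, 0) with hf
  have hfval : ∀ s (h1 : i ≤ s) (h2 : s ≤ m + n - 2 - i), f s = em m n (p ⟨s - i, by omega⟩) := by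
    intro s h1 h2
    simp only [hf, dif_pos (And.intro h1 h2)]
  refine ⟨f, ?_, ?_, ?_, ?_⟩
  · rw [hfval i le_rfl (by omega)]
    have e : (⟨i - i, by omega⟩ : Fin (d+1)) = 0 := by
      apply Fin.ext; simp
    rw [e, h0]
    unfold em
    rw [hA1, hA2]
  · rw [hfval (m + n - 2 - i) (by omega) le_rfl]
    have e : (⟨m + n - 2 - i - i, by omega⟩ : Fin (d+1)) = ⟨d, by omega⟩ := by
      apply Fin.ext; simp; omega
    rw [e]
    unfold em
    rw [hlv.1, hlv.2]
  · intro s hs1 hs2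
    rw [hfval s hs1 (by omega), hfval (s+1) (by omega) (by omega)]
    have hlt : s - i < d := by omega
    have h2 := hstepv (s - i) hlt
    have e : (⟨s + 1 - i, by omega⟩ : Fin (d+1)) = ⟨s - i + 1, by omega⟩ := by
      apply Fin.ext; simp; omega
    rw [e]
    unfold step em
    rcases h2 with ⟨ha, hb⟩ | ⟨ha, hb⟩
    · exact Or.inl ⟨ha, hb⟩
    · exact Or.inr ⟨ha, hb⟩
  · rw [hP]
    ext x
    simp only [Finset.mem_image, Finset.mem_Icc, Finset.mem_univ, true_and]
    constructor
    · rintro ⟨v, ⟨jj, rfl⟩, rfl⟩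
      refine ⟨i + (jj : ℕ), ⟨by omega, by have := jj.isLt; omega⟩, ?_⟩
      rw [hfval (i + (jj : ℕ)) (by omega) (by have := jj.isLt; omega)]
      exact congrArg (em m n) (congrArg p (by apply Fin.ext; simp))
    · rintro ⟨s, ⟨h1, h2⟩, rfl⟩
      rw [hfval s h1 h2]
      exact ⟨p ⟨s - i, by omega⟩, ⟨⟨s - i, by omega⟩, rfl⟩, rfl⟩

lemma npath_to_ispath {m n : ℕ} {i : ℕ} (him : i + 1 < m) (hin : i + 1 < n)
    {Qi : Finset (ℕ × ℕ)} (h : NPath m n i Qi) {A B : Fin m × Fin n}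
    (hA1 : (A.1 : ℕ) = i) (hA2 : (A.2 : ℕ) = n - 1) (hB1 : (B.1 : ℕ) = m - 1)
    (hB2 : (B.2 : ℕ) = i) :
    ∃ P : Finset (Fin m × Fin n), IsPath P A B ∧ P.image (em m n) = Qi := by
  obtain ⟨f, h0, hlast, hstep, hQ⟩ := h
  have hbnd := path_bounds him hin h0 hlast hstep
  set d := m + n - 2 - i - i with hd
  have hbnd' : ∀ jj, jj ≤ d → (f (i + jj)).1 < m ∧ (f (i + jj)).2 < n := by
    intro jj hjj
    have := hbnd (i + jj) (by omega) (by omega)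
    omega
  set p : Fin (d + 1) → Fin m × Fin n := fun jj =>
    (⟨(f (i + (jj : ℕ))).1, (hbnd' jj (by have := jj.isLt; omega)).1⟩,
     ⟨(f (i + (jj : ℕ))).2, (hbnd' jj (by have := jj.isLt; omega)).2⟩) with hp
  have hpem : ∀ jj : Fin (d + 1), em m n (p jj) = f (i + (jj : ℕ)) := by
    intro jj
    simp [hp, em]
  refine ⟨Finset.image p Finset.univ, ⟨d, p, ?_, ?_, ?_, rfl⟩, ?_⟩
  · have : em m n (p 0) = em m n A := by
      rw [hpem]
      simp only [Fin.val_zero, Nat.add_zero, h0]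
      unfold em
      rw [hA1, hA2]
    exact em_inj this
  · have : em m n (p (Fin.last d)) = em m n B := by
      rw [hpem]
      have e : i + (Fin.last d : ℕ) = m + n - 2 - i := by
        have : (Fin.last d : ℕ) = d := rfl
        omega
      rw [e, hlast]
      unfold em
      rw [hB1, hB2]
    exact em_inj this
  · intro jj
    have hs := hstep (i + (jj : ℕ)) (by omega) (by have := jj.isLt; omega)
    have e1 : em m n (p jj.succ) = f (i + (jj : ℕ) + 1) := by
      rw [hpem]
      congr 1
    have e2 : em m n (p jj.castSucc) = f (i + (jj : ℕ)) := by
      rw [hpem]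
      congr 1
    unfold step at hs
    have q1 : ((p jj.succ).1 : ℕ) = (f (i + (jj : ℕ) + 1)).1 := by rw [← e1]; rfl
    have q2 : ((p jj.succ).2 : ℕ) = (f (i + (jj : ℕ) + 1)).2 := by rw [← e1]; rfl
    have q3 : ((p jj.castSucc).1 : ℕ) = (f (i + (jj : ℕ))).1 := by rw [← e2]; rfl
    have q4 : ((p jj.castSucc).2 : ℕ) = (f (i + (jj : ℕ))).2 := by rw [← e2]; rfl
    rcases hs with ⟨ha, hb⟩ | ⟨ha, hb⟩
    · left
      refine ⟨by omega, ?_⟩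
      apply Fin.ext
      omega
    · right
      refine ⟨?_, by omega⟩
      apply Fin.ext
      omega
  · rw [hQ]
    ext x
    simp only [Finset.mem_image, Finset.mem_Icc, Finset.mem_univ, true_and]
    constructor
    · rintro ⟨v, ⟨jj, rfl⟩, rfl⟩
      refine ⟨i + (jj : ℕ), ⟨by omega, by have := jj.isLt; omega⟩, ?_⟩
      rw [hpem]
    · rintro ⟨s, ⟨h1, h2⟩, rfl⟩
      refine ⟨p ⟨s - i, by omega⟩, ⟨⟨s - i, by omega⟩, rfl⟩, ?_⟩
      rw [hpem]
      congr 1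
      simp
      omega


end DF

/-- The facets of `Δ_t` are exactly the families of pairwise disjoint paths
`P_1, …, P_{t-1}` where `P_i` goes from `(i, n)` to `(m, i)` (here written `0`-indexed:
from `(i, n-1)` to `(m-1, i)` for `i = 0, …, t-2`). -/
theorem facets_delta_iff (m n t : ℕ) (ht : 1 ≤ t) (htm : t ≤ m) (htn : t ≤ n)
    (F : Finset (Fin m × Fin n)) :
    IsFacetDelta t F ↔
      ∃ P : Fin (t - 1) → Finset (Fin m × Fin n),
        (∀ i : Fin (t - 1),
          IsPath (P i)
            (⟨(i : ℕ), by have := i.isLt; omega⟩, ⟨n - 1, by omega⟩)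
            (⟨m - 1, by omega⟩, ⟨(i : ℕ), by have := i.isLt; omega⟩)) ∧
        (∀ i j : Fin (t - 1), i ≠ j → Disjoint (P i) (P j)) ∧
        F = Finset.univ.biUnion P := by
  classical
  constructor
  · rintro ⟨hface, hmax⟩
    have hFace : DF.Face t (F.image (DF.em m n)) := (DF.face_transfer F).mp hface
    have hbox : ∀ v ∈ F.image (DF.em m n), DF.box m n 0 v := by
      intro v hv
      obtain ⟨a, _, rfl⟩ := Finset.mem_image.mp hv
      exact ⟨Nat.zero_le _, a.1.isLt, Nat.zero_le _, a.2.isLt⟩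
    have hTight : DF.Tight m n 0 t (F.image (DF.em m n)) := by
      intro x hxbox hxF
      obtain ⟨_, hx1, _, hx2⟩ := hxbox
      set v : Fin m × Fin n := (⟨x.1, hx1⟩, ⟨x.2, hx2⟩) with hv
      have hvem : DF.em m n v = x := rfl
      have hvF : v ∉ F := fun hc => hxF (by rw [← hvem]; exact Finset.mem_image_of_mem _ hc)
      have hG : ¬ IsFaceDelta t (insert v F) := by
        intro hGf
        have heq := hmax _ hGf (Finset.subset_insert _ _)
        exact hvF (heq ▸ Finset.mem_insert_self v F)
      rw [IsFaceDelta] at hG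
      obtain ⟨A, hAsub, hAcard, hAanti⟩ := not_not.mp hG
      have hvA : v ∈ A := by
        by_contra hvA
        exact hface ⟨A, fun a ha =>
          (Finset.mem_insert.mp (hAsub ha)).resolve_left (fun h => hvA (h ▸ ha)),
          hAcard, hAanti⟩
      have hS : ∀ a ∈ A.image (DF.em m n), ∀ b ∈ A.image (DF.em m n), a ≠ b →
          DF.sw a b ∨ DF.sw b a := by
        intro a ha b hb hab
        obtain ⟨a', ha', rfl⟩ := Finset.mem_image.mp ha
        obtain ⟨b', hb', rfl⟩ := Finset.mem_image.mp hb
        have h := hAanti a' ha' b' hb' (fun h => hab (by rw [h]))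
        exact DF.incomp_sw h.1 h.2
      obtain ⟨l, hpw, hmem, hlen⟩ := DF.sortAntichain _ hS
      have hxl : x ∈ l := (hmem x).mpr (by rw [← hvem]; exact Finset.mem_image_of_mem _ hvA)
      obtain ⟨ys, zs, hsplit⟩ := List.append_of_mem hxl
      have hpw2 : (ys ++ x :: zs).Pairwise DF.sw := by rw [← hsplit]; exact hpw
      have hnd : (ys ++ x :: zs).Nodup := hpw2.nodup
      have hxys : x ∉ ys ++ zs := (List.nodup_cons.mp (List.nodup_middle.mp hnd)).1
      have hmemF : ∀ a, a ∈ l → a ≠ x → a ∈ F.image (DF.em m n) := by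
        intro a hal hax
        obtain ⟨b, hb, rfl⟩ := Finset.mem_image.mp ((hmem a).mp hal)
        rcases Finset.mem_insert.mp (hAsub hb) with rfl | hbF
        · exact absurd hvem hax
        · exact Finset.mem_image_of_mem _ hbF
      refine ⟨ys, zs, ?_, ?_, hpw2, ?_⟩
      · intro a ha
        refine hmemF a (by rw [hsplit]; exact List.mem_append_left _ ha) ?_
        intro h
        exact hxys (h ▸ List.mem_append_left zs ha)
      · intro a ha
        refine hmemF a
          (by rw [hsplit]; exact List.mem_append_right _ (List.mem_cons_of_mem _ ha)) ?_
        intro h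
        exact hxys (h ▸ List.mem_append_right ys ha)
      · have hl : l.length = t := by
          rw [hlen, Finset.card_image_of_injective _ DF.em_inj, hAcard]
        rw [hsplit] at hl
        simp at hl
        omega
    obtain ⟨Q, hQ0, hQpath, hQdisj, hQeq⟩ :=
      DF.aux m n t 0 (F.image (DF.em m n)) (by omega) (by omega) hbox hFace hTight
    have hchoice : ∀ i : Fin (t-1), ∃ P' : Finset (Fin m × Fin n),
        IsPath P'
          (⟨(i : ℕ), by have := i.isLt; omega⟩, ⟨n - 1, by omega⟩)
          (⟨m - 1, by omega⟩, ⟨(i : ℕ), by have := i.isLt; omega⟩) ∧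
        P'.image (DF.em m n) = Q (i : ℕ) := by
      intro i
      have hlt := i.isLt
      have hp := hQpath (i : ℕ) (Nat.zero_le _) (by omega)
      exact DF.npath_to_ispath (by omega) (by omega) hp rfl rfl rfl rfl
    choose P hP1 hP2 using hchoice
    refine ⟨P, hP1, ?_, ?_⟩
    · intro i j hij
      refine Finset.disjoint_left.mpr ?_
      intro a hai haj
      have h1 : DF.em m n a ∈ Q (i : ℕ) := by
        rw [← hP2 i]; exact Finset.mem_image_of_mem _ hai
      have h2 : DF.em m n a ∈ Q (j : ℕ) := by
        rw [← hP2 j]; exact Finset.mem_image_of_mem _ haj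
      have hij' : (i : ℕ) ≠ (j : ℕ) := fun h => hij (Fin.ext h)
      exact Finset.disjoint_left.mp (hQdisj _ _ hij') h1 h2
    · apply Finset.image_injective DF.em_inj
      rw [Finset.biUnion_image, hQeq]
      ext x
      simp only [Finset.mem_biUnion, Finset.mem_Ico, Finset.mem_univ, true_and]
      constructor
      · rintro ⟨j, ⟨_, hj⟩, hx⟩
        have hj' : j < t - 1 := by omega
        refine ⟨⟨j, hj'⟩, ?_⟩
        rw [hP2 ⟨j, hj'⟩]
        exact hx
      · rintro ⟨i, hx⟩
        rw [hP2 i] at hx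
        exact ⟨(i : ℕ), ⟨Nat.zero_le _, by have := i.isLt; omega⟩, hx⟩
  · rintro ⟨P, hpath, hdisj, hFeq⟩
    set Q : ℕ → Finset (ℕ × ℕ) :=
      fun j => if h : j < t - 1 then (P ⟨j, h⟩).image (DF.em m n) else ∅ with hQ
    have hQval : ∀ j (h : j < t - 1), Q j = (P ⟨j, h⟩).image (DF.em m n) := by
      intro j h
      simp only [hQ, dif_pos h]
    have hQN : ∀ j, j + 1 < t → DF.NPath m n j (Q j) := by
      intro j hj
      have hj' : j < t - 1 := by omega
      have hnp := DF.ispath_to_npath (i := j) (by omega) (by omega)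
        rfl rfl rfl rfl (hpath ⟨j, hj'⟩)
      rw [hQval j hj']
      exact hnp
    have hQdisj : ∀ i j, i ≠ j → Disjoint (Q i) (Q j) := by
      intro i j hij
      by_cases hi : i < t - 1
      · by_cases hj : j < t - 1
        · rw [hQval i hi, hQval j hj]
          refine Finset.disjoint_left.mpr ?_
          intro a hai haj
          obtain ⟨b, hb, rfl⟩ := Finset.mem_image.mp hai
          obtain ⟨c, hc, hce⟩ := Finset.mem_image.mp haj
          have : c = b := DF.em_inj hce
          rw [this] at hc
          have hne : (⟨i, hi⟩ : Fin (t-1)) ≠ ⟨j, hj⟩ := fun h => hij (by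
            have := congrArg Fin.val h; simpa using this)
          exact Finset.disjoint_left.mp (hdisj _ _ hne) hb hc
        · have : Q j = ∅ := by simp only [hQ, dif_neg hj]
          simp [this]
      · have : Q i = ∅ := by simp only [hQ, dif_neg hi]
        simp [this]
    have hfamE : ∃ fs, DF.FamData m n t Q fs := by
      have h2 : ∀ jj, ∃ fj : ℕ → ℕ × ℕ, jj + 1 < t →
          (fj jj = (jj, n - 1) ∧ fj (m + n - 2 - jj) = (m - 1, jj) ∧
           (∀ s, jj ≤ s → s < m + n - 2 - jj → DF.step (fj s) (fj (s + 1))) ∧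
           Q jj = (Finset.Icc jj (m + n - 2 - jj)).image fj) := by
        intro jj
        by_cases h : jj + 1 < t
        · obtain ⟨fj, hfj⟩ := hQN jj h
          exact ⟨fj, fun _ => hfj⟩
        · exact ⟨fun _ => (0, 0), fun hc => absurd hc h⟩
      choose fs hfs using h2
      exact ⟨fs, hfs⟩
    obtain ⟨fs, hfs⟩ := hfamE
    have himg : F.image (DF.em m n) = (Finset.Ico 0 (t-1)).biUnion Q := by
      rw [hFeq, Finset.biUnion_image]
      ext x
      simp only [Finset.mem_biUnion, Finset.mem_Ico, Finset.mem_univ, true_and]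
      constructor
      · rintro ⟨i, hx⟩
        refine ⟨(i : ℕ), ⟨Nat.zero_le _, i.isLt⟩, ?_⟩
        rw [hQval (i : ℕ) i.isLt]
        have : (⟨(i : ℕ), i.isLt⟩ : Fin (t-1)) = i := Fin.ext rfl
        rw [this]
        exact hx
      · rintro ⟨j, ⟨_, hj⟩, hx⟩
        rw [hQval j hj] at hx
        exact ⟨⟨j, hj⟩, hx⟩
    constructor
    · rw [DF.face_transfer, himg]
      exact DF.face_union htm htn ht hfs hQdisj
    · intro G hGf hFG
      refine Finset.Subset.antisymm ?_ hFG
      intro v hvG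
      by_contra hvF
      have hx : DF.em m n v ∉ F.image (DF.em m n) := by
        intro hc
        obtain ⟨b, hb, hbe⟩ := Finset.mem_image.mp hc
        exact hvF (DF.em_inj hbe ▸ hb)
      rw [himg] at hx
      have hTight := DF.tight_union htm htn ht hfs hQdisj
      have hvbox : DF.box m n 0 (DF.em m n v) :=
        ⟨Nat.zero_le _, v.1.isLt, Nat.zero_le _, v.2.isLt⟩
      obtain ⟨ys, zs, hys, hzs, hpw, hlen⟩ := hTight (DF.em m n v) hvbox hx
      have hGface := (DF.face_transfer G).mp hGf
      have hlt := hGface (ys ++ DF.em m n v :: zs) hpw (by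
        intro a ha
        rcases List.mem_append.mp ha with h | h
        · have : a ∈ F.image (DF.em m n) := by rw [himg]; exact hys a h
          exact Finset.image_subset_image hFG this
        · rcases List.mem_cons.mp h with rfl | h
          · exact Finset.mem_image_of_mem _ hvG
          · have : a ∈ F.image (DF.em m n) := by rw [himg]; exact hzs a h
            exact Finset.image_subset_image hFG this)
      simp at hlt
      omega
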